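/- Let m ≥ 1 and k₁,…,k_m ≥ 1 be integers, N ≥ k + m with k := k₁+⋯+k_m, and τ₁,…,τ_m > 0. Define φ_i(t) := (1/(k_i+1))·(1 − (τ_i/t)^{k_i+1}) for t > 0, and χ(y¹,…,y^m,z) := (φ₁(|y¹|)y¹, …, φ_m(|y^m|)y^m, z) for y^i ∈ ℝ^{k_i+1}∖{0} and z ∈ ℝ^{N−k−m}. Then for every such point (y¹,…,y^m,z) and every ξ ∈ ℝ^N, ⟨dχ(y¹,…,y^m,z)[ξ], ξ⟩ ≤ max{1 − k₁φ₁(|y¹|), …, 1 − k_mφ_m(|y^m|), 1}·|ξ|², where dχ denotes the (total) derivative of χ and ⟨·,·⟩ the Euclidean inner product. -/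

import Mathlib

open RealInnerProductSpace

/-- The i-th block `y^i ∈ ℝ^{k_i+1}` of a point of
`ℝ^N = ℝ^{k₁+1} × ⋯ × ℝ^{k_m+1} × ℝ^{N-k-m}`. -/
def blockOf {m : ℕ} {k : Fin m → ℕ} {d : ℕ}
    (x : EuclideanSpace ℝ ((Σ i : Fin m, Fin (k i + 1)) ⊕ Fin d)) (i : Fin m) :
    EuclideanSpace ℝ (Fin (k i + 1)) :=
  WithLp.toLp 2 (fun a => x (Sum.inl ⟨i, a⟩))

/-- The vector field χ(y¹,…,y^m,z) = (φ₁(|y¹|)y¹,…,φ_m(|y^m|)y^m, z), where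
φ_i(t) = (1/(k_i+1))(1 − (τ_i/t)^{k_i+1}). -/
noncomputable def chiField {m : ℕ} {k : Fin m → ℕ} {d : ℕ} (τ : Fin m → ℝ)
    (x : EuclideanSpace ℝ ((Σ i : Fin m, Fin (k i + 1)) ⊕ Fin d)) :
    EuclideanSpace ℝ ((Σ i : Fin m, Fin (k i + 1)) ⊕ Fin d) :=
  WithLp.toLp 2 (fun j => Sum.elim
    (fun p : Σ i : Fin m, Fin (k i + 1) =>
      ((1 / ((k p.1 : ℝ) + 1)) * (1 - (τ p.1 / ‖blockOf x p.1‖) ^ (k p.1 + 1))) * x (Sum.inl p))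
    (fun j' => x (Sum.inr j')) j)

lemma aux_scalar {F : Type*} [NormedAddCommGroup F] [InnerProductSpace ℝ F]
    (c τ : ℝ) (n : ℕ) (y : F) (hy : y ≠ 0) :
    HasFDerivAt (fun v : F => c * (1 - (τ / ‖v‖) ^ n))
      ((c * n * τ ^ n / ‖y‖ ^ (n + 2)) • innerSL ℝ y) y := by
  have hty : (0:ℝ) < ‖y‖ := norm_pos_iff.2 hy
  have hq : ∀ v : F, ⟪v, v⟫ = ‖v‖ ^ 2 := fun v => real_inner_self_eq_norm_sq v
  set r : ℝ := -(n : ℝ) / 2 with hr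
  have h1 : HasFDerivAt (fun v : F => ⟪v, v⟫) ((2:ℝ) • innerSL ℝ y) y := by
    have h := (hasFDerivAt_id y).inner (𝕜 := ℝ) (hasFDerivAt_id y)
    refine h.congr_fderiv ?_
    ext ξ
    simp [fderivInnerCLM_apply, real_inner_comm, two_mul]
  have h2 : HasFDerivAt (fun v : F => ⟪v, v⟫ ^ r)
      ((r * ⟪y, y⟫ ^ (r - 1)) • ((2:ℝ) • innerSL ℝ y)) y :=
    h1.rpow_const (Or.inl (by rw [hq]; positivity))
  have h3 : HasFDerivAt (fun v : F => c - c * τ ^ n * ⟪v, v⟫ ^ r)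
      (-((c * τ ^ n) • ((r * ⟪y, y⟫ ^ (r - 1)) • ((2:ℝ) • innerSL ℝ y)))) y :=
    (h2.const_mul (c * τ ^ n)).const_sub c
  have hev : (fun v : F => c * (1 - (τ / ‖v‖) ^ n)) =ᶠ[nhds y]
      fun v : F => c - c * τ ^ n * ⟪v, v⟫ ^ r := by
    filter_upwards [eventually_ne_nhds hy] with v hv
    have htv : (0:ℝ) < ‖v‖ := norm_pos_iff.2 hv
    have hvr : (⟪v, v⟫ : ℝ) ^ r = (‖v‖ ^ n)⁻¹ := by
      rw [hq, ← Real.rpow_natCast ‖v‖ 2, ← Real.rpow_mul (norm_nonneg v)]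
      have h2r : ((2:ℕ):ℝ) * r = -(n:ℝ) := by push_cast; rw [hr]; ring
      rw [h2r, Real.rpow_neg (norm_nonneg v), Real.rpow_natCast]
    rw [hvr, div_pow]
    field_simp
  have h4 := h3.congr_of_eventuallyEq hev
  convert h4 using 1
  ext ξ
  have ht0 : (⟪y, y⟫ : ℝ) ^ (r - 1) = (‖y‖ ^ (n + 2))⁻¹ := by
    rw [hq, ← Real.rpow_natCast ‖y‖ 2, ← Real.rpow_mul (norm_nonneg y)]
    have h2r : ((2:ℕ):ℝ) * (r - 1) = -(((n + 2 : ℕ) : ℝ)) := by rw [hr]; push_cast; ring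
    rw [h2r, Real.rpow_neg (norm_nonneg y), Real.rpow_natCast]
  simp only [ContinuousLinearMap.smul_apply, ContinuousLinearMap.neg_apply, smul_eq_mul]
  rw [ht0, hr]
  field_simp

noncomputable def blockCLM {m : ℕ} (k : Fin m → ℕ) (d : ℕ) (i : Fin m) :
    EuclideanSpace ℝ ((Σ i : Fin m, Fin (k i + 1)) ⊕ Fin d) →L[ℝ] EuclideanSpace ℝ (Fin (k i + 1)) :=
  ((PiLp.continuousLinearEquiv 2 ℝ (fun _ : Fin (k i + 1) => ℝ)).symm.toContinuousLinearMap).comp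
    (ContinuousLinearMap.pi fun a => EuclideanSpace.proj (Sum.inl ⟨i, a⟩))


theorem main_aux (m : ℕ) (hm : 1 ≤ m) (k : Fin m → ℕ) (d : ℕ)
    (τ : Fin m → ℝ) (hτ : ∀ i, 0 < τ i)
    (φ : Fin m → ℝ → ℝ)
    (hφ : ∀ i, ∀ t : ℝ, φ i t = (1 / ((k i : ℝ) + 1)) * (1 - (τ i / t) ^ (k i + 1)))
    (x ξ : EuclideanSpace ℝ ((Σ i : Fin m, Fin (k i + 1)) ⊕ Fin d))
    (hx : ∀ i, blockOf x i ≠ 0) :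
    ⟪fderiv ℝ (chiField (d := d) τ) x ξ, ξ⟫ ≤
      max (⨆ i : Fin m, (1 - (k i : ℝ) * φ i ‖blockOf x i‖)) 1 * ‖ξ‖ ^ 2 := by
  classical
  haveI : Nonempty (Fin m) := Fin.pos_iff_nonempty.mp hm
  have hty : ∀ i, (0:ℝ) < ‖blockOf x i‖ := fun i => norm_pos_iff.2 (hx i)
  set S : Fin m → ℝ := fun i =>
    (1 / ((k i : ℝ) + 1)) * (1 - (τ i / ‖blockOf x i‖) ^ (k i + 1)) with hSdef
  set β : Fin m → ℝ := fun i =>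
    1 / ((k i : ℝ) + 1) * ((k i + 1 : ℕ) : ℝ) * τ i ^ (k i + 1) / ‖blockOf x i‖ ^ (k i + 1 + 2)
    with hβdef
  set D : ∀ _ : Fin m,
      EuclideanSpace ℝ ((Σ i : Fin m, Fin (k i + 1)) ⊕ Fin d) →L[ℝ] ℝ := fun i =>
    β i • ((innerSL ℝ (blockOf x i)).comp (blockCLM k d i)) with hDdef
  have hS : ∀ i, HasFDerivAt
      (fun x' : EuclideanSpace ℝ ((Σ i : Fin m, Fin (k i + 1)) ⊕ Fin d) =>
        (1 / ((k i : ℝ) + 1)) * (1 - (τ i / ‖blockOf x' i‖) ^ (k i + 1))) (D i) x := by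
    intro i
    have h := (aux_scalar (1 / ((k i : ℝ) + 1)) (τ i) (k i + 1) (blockOf x i) (hx i)).comp x
      (blockCLM k d i).hasFDerivAt
    rw [ContinuousLinearMap.smul_comp] at h
    exact h
  set Mc : ∀ _ : (Σ i : Fin m, Fin (k i + 1)) ⊕ Fin d,
      EuclideanSpace ℝ ((Σ i : Fin m, Fin (k i + 1)) ⊕ Fin d) →L[ℝ] ℝ := fun j =>
    Sum.elim
      (fun p : Σ i : Fin m, Fin (k i + 1) =>
        S p.1 • EuclideanSpace.proj (Sum.inl p) + x (Sum.inl p) • D p.1)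
      (fun j' => EuclideanSpace.proj (Sum.inr j')) j with hMcdef
  have hMc : ∀ j, HasFDerivAt (fun x' => chiField τ x' j) (Mc j) x := by
    intro j
    cases j with
    | inl p =>
        have hproj : HasFDerivAt
            (fun x' : EuclideanSpace ℝ ((Σ i : Fin m, Fin (k i + 1)) ⊕ Fin d) =>
              x' (Sum.inl p))
            (EuclideanSpace.proj (𝕜 := ℝ)
              (Sum.inl p : (Σ i : Fin m, Fin (k i + 1)) ⊕ Fin d)) x :=
          (EuclideanSpace.proj (𝕜 := ℝ)
            (Sum.inl p : (Σ i : Fin m, Fin (k i + 1)) ⊕ Fin d)).hasFDerivAt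
        exact (hS p.1).mul hproj
    | inr j' =>
        exact (EuclideanSpace.proj (𝕜 := ℝ)
          (Sum.inr j' : (Σ i : Fin m, Fin (k i + 1)) ⊕ Fin d)).hasFDerivAt
  have hG : HasFDerivAt (fun x' (j : (Σ i : Fin m, Fin (k i + 1)) ⊕ Fin d) => chiField τ x' j)
      (ContinuousLinearMap.pi Mc) x := hasFDerivAt_pi.2 hMc
  have hchi : HasFDerivAt (chiField (m := m) (k := k) (d := d) τ)
      (((PiLp.continuousLinearEquiv 2 ℝ
          (fun _ : (Σ i : Fin m, Fin (k i + 1)) ⊕ Fin d => ℝ)).symm.toContinuousLinearMap).comp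
        (ContinuousLinearMap.pi Mc)) x :=
    (ContinuousLinearEquiv.comp_hasFDerivAt_iff
      (PiLp.continuousLinearEquiv 2 ℝ
        (fun _ : (Σ i : Fin m, Fin (k i + 1)) ⊕ Fin d => ℝ)).symm).mpr hG
  obtain ⟨L, hL, hLcoord⟩ : ∃ L, HasFDerivAt (chiField (d := d) τ) L x ∧
      ∀ j, (L ξ) j = Mc j ξ := ⟨_, hchi, fun _ => rfl⟩
  rw [hL.fderiv]
  -- coordinate values of the derivative
  have hMcinl : ∀ p : Σ i : Fin m, Fin (k i + 1),
      Mc (Sum.inl p) ξ = S p.1 * ξ (Sum.inl p)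
        + x (Sum.inl p) * (β p.1 * ⟪blockOf x p.1, blockOf ξ p.1⟫) := fun _ => rfl
  have hMcinr : ∀ j' : Fin d, Mc (Sum.inr j') ξ = ξ (Sum.inr j') := fun _ => rfl
  -- block norms
  have hξ2 : ∀ i, ∑ a, ξ (Sum.inl ⟨i, a⟩) * ξ (Sum.inl ⟨i, a⟩) = ‖blockOf ξ i‖ ^ 2 := by
    intro i
    rw [← real_inner_self_eq_norm_sq, PiLp.inner_apply]
    simp [RCLike.inner_apply, blockOf, sq]
  have hxξ : ∀ i, ∑ a, x (Sum.inl ⟨i, a⟩) * ξ (Sum.inl ⟨i, a⟩)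
      = ⟪blockOf x i, blockOf ξ i⟫ := by
    intro i
    rw [PiLp.inner_apply]
    simp [RCLike.inner_apply, blockOf]
    exact Finset.sum_congr rfl fun _ _ => mul_comm _ _
  have h1 : ⟪L ξ, ξ⟫ = ∑ i, (S i * ‖blockOf ξ i‖ ^ 2
        + β i * ⟪blockOf x i, blockOf ξ i⟫ ^ 2)
      + ∑ j', ξ (Sum.inr j') * ξ (Sum.inr j') := by
    rw [PiLp.inner_apply]
    simp only [RCLike.inner_apply, conj_trivial]
    rw [Fintype.sum_sum_type]
    simp only [hLcoord, hMcinl, hMcinr]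
    rw [← Finset.univ_sigma_univ, Finset.sum_sigma]
    congr 1
    refine Finset.sum_congr rfl fun i _ => ?_
    refine (Finset.sum_congr rfl fun a _ => mul_comm _ _).trans ?_
    calc ∑ a, (S i * ξ (Sum.inl ⟨i, a⟩)
          + x (Sum.inl ⟨i, a⟩) * (β i * ⟪blockOf x i, blockOf ξ i⟫)) * ξ (Sum.inl ⟨i, a⟩)
        = S i * (∑ a, ξ (Sum.inl ⟨i, a⟩) * ξ (Sum.inl ⟨i, a⟩))
          + (β i * ⟪blockOf x i, blockOf ξ i⟫)
            * (∑ a, x (Sum.inl ⟨i, a⟩) * ξ (Sum.inl ⟨i, a⟩)) := by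
          rw [Finset.mul_sum, Finset.mul_sum, ← Finset.sum_add_distrib]
          exact Finset.sum_congr rfl fun a _ => by ring
      _ = S i * ‖blockOf ξ i‖ ^ 2 + β i * ⟪blockOf x i, blockOf ξ i⟫ ^ 2 := by
          rw [hξ2 i, hxξ i]; ring
  rw [h1]
  -- key algebraic identity
  have hkey : ∀ i, S i + β i * ‖blockOf x i‖ ^ 2
      = 1 - (k i : ℝ) * φ i ‖blockOf x i‖ := by
    intro i
    have ht := hty i
    have hne : ‖blockOf x i‖ ≠ 0 := ne_of_gt ht
    rw [hφ, hSdef, hβdef]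
    simp only []
    rw [div_pow]
    push_cast
    field_simp
    ring
  have hcs : ∀ i, (⟪blockOf x i, blockOf ξ i⟫ : ℝ) ^ 2
      ≤ ‖blockOf x i‖ ^ 2 * ‖blockOf ξ i‖ ^ 2 := by
    intro i
    have h := real_inner_mul_inner_self_le (blockOf x i) (blockOf ξ i)
    rw [real_inner_self_eq_norm_sq, real_inner_self_eq_norm_sq] at h
    calc (⟪blockOf x i, blockOf ξ i⟫ : ℝ) ^ 2
        = ⟪blockOf x i, blockOf ξ i⟫ * ⟪blockOf x i, blockOf ξ i⟫ := sq _
      _ ≤ _ := h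
  have hβpos : ∀ i, 0 ≤ β i := by
    intro i
    rw [hβdef]
    exact div_nonneg (mul_nonneg (mul_nonneg (by positivity) (by positivity))
      (pow_nonneg (hτ i).le _)) (pow_nonneg (norm_nonneg _) _)
  have hCi : ∀ i, S i * ‖blockOf ξ i‖ ^ 2 + β i * ⟪blockOf x i, blockOf ξ i⟫ ^ 2
      ≤ (1 - (k i : ℝ) * φ i ‖blockOf x i‖) * ‖blockOf ξ i‖ ^ 2 := by
    intro i
    rw [← hkey i]
    have h := mul_le_mul_of_nonneg_left (hcs i) (hβpos i)
    nlinarith [h]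
  have hMxi : ∀ i, (1 - (k i : ℝ) * φ i ‖blockOf x i‖)
      ≤ max (⨆ i : Fin m, (1 - (k i : ℝ) * φ i ‖blockOf x i‖)) 1 := fun i =>
    le_trans (le_ciSup (f := fun i => 1 - (k i : ℝ) * φ i ‖blockOf x i‖)
      (Set.Finite.bddAbove (Set.finite_range _)) i) (le_max_left _ _)
  have hnormξ : (‖ξ‖ : ℝ) ^ 2 = ∑ i, ‖blockOf ξ i‖ ^ 2
      + ∑ j', ξ (Sum.inr j') * ξ (Sum.inr j') := by
    rw [← real_inner_self_eq_norm_sq, PiLp.inner_apply]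
    simp only [RCLike.inner_apply, conj_trivial]
    rw [Fintype.sum_sum_type, ← Finset.univ_sigma_univ, Finset.sum_sigma]
    congr 1
    exact Finset.sum_congr rfl fun i _ => hξ2 i
  set Mx : ℝ := max (⨆ i : Fin m, (1 - (k i : ℝ) * φ i ‖blockOf x i‖)) 1 with hMxdef
  calc ∑ i, (S i * ‖blockOf ξ i‖ ^ 2 + β i * ⟪blockOf x i, blockOf ξ i⟫ ^ 2)
      + ∑ j', ξ (Sum.inr j') * ξ (Sum.inr j')
      ≤ ∑ i, Mx * ‖blockOf ξ i‖ ^ 2 + Mx * ∑ j', ξ (Sum.inr j') * ξ (Sum.inr j') := by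
        refine add_le_add (Finset.sum_le_sum fun i _ => ?_) ?_
        · exact le_trans (hCi i) (mul_le_mul_of_nonneg_right (hMxi i) (sq_nonneg _))
        · exact le_mul_of_one_le_left
            (Finset.sum_nonneg fun j _ => mul_self_nonneg _) (le_max_right _ _)
    _ = Mx * (∑ i, ‖blockOf ξ i‖ ^ 2 + ∑ j', ξ (Sum.inr j') * ξ (Sum.inr j')) := by
        rw [← Finset.mul_sum, mul_add]
    _ = Mx * ‖ξ‖ ^ 2 := by rw [hnormξ]


/-- ⟨dχ(x)[ξ], ξ⟩ ≤ max{1 − k₁φ₁(|y¹|), …, 1 − k_mφ_m(|y^m|), 1}·|ξ|². -/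
theorem stmt_10 (m : ℕ) (hm : 1 ≤ m) (k : Fin m → ℕ) (hk : ∀ i, 1 ≤ k i) (N : ℕ)
    (hN : (∑ i, k i) + m ≤ N) (τ : Fin m → ℝ) (hτ : ∀ i, 0 < τ i)
    (φ : Fin m → ℝ → ℝ)
    (hφ : ∀ i, ∀ t : ℝ, φ i t = (1 / ((k i : ℝ) + 1)) * (1 - (τ i / t) ^ (k i + 1)))
    (x ξ : EuclideanSpace ℝ ((Σ i : Fin m, Fin (k i + 1)) ⊕ Fin (N - (∑ i, k i) - m)))
    (hx : ∀ i, blockOf x i ≠ 0) :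
    ⟪fderiv ℝ (chiField (d := N - (∑ i, k i) - m) τ) x ξ, ξ⟫ ≤
      max (⨆ i : Fin m, (1 - (k i : ℝ) * φ i ‖blockOf x i‖)) 1 * ‖ξ‖ ^ 2 :=
  main_aux m hm k (N - (∑ i, k i) - m) τ hτ φ hφ x ξ hx
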